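/- For every a.e. strongly measurable x : Ω → A there exists a measurable function a : Ω → ℂ such that a·1 − x is not invertible in L⁰(Ω, A); that is, there is no a.e. strongly measurable y : Ω → A with (a(ω)·1 − x(ω))y(ω) = y(ω)(a(ω)·1 − x(ω)) = 1 for μ-almost every ω. In other words, the spectrum sp(x) = {a ∈ L⁰(Ω, ℂ) : a·1 − x not invertible} is non-empty. (Proposition 2.4, specialized to the Banach–Kantorovich algebra L⁰(Ω, A).) -/

import Mathlib

open MeasureTheory Filter

namespace Stmt6Aux

noncomputable section


def phi (t : ℝ) : ℝ := t / (1 + |t|)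

def psi (s : ℝ) : ℝ := s / (1 - |s|)

lemma abs_phi (t : ℝ) : |phi t| = |t| / (1 + |t|) := by
  have h : (0:ℝ) < 1 + |t| := by positivity
  rw [phi, abs_div, abs_of_pos h]

lemma abs_phi_le {t C : ℝ} (h : |t| ≤ C) : |phi t| ≤ C / (1 + C) := by
  rw [abs_phi]
  have h0 : (0:ℝ) ≤ |t| := abs_nonneg t
  have h1 : (0:ℝ) < 1 + |t| := by positivity
  have h2 : (0:ℝ) < 1 + C := by linarith
  rw [div_le_div_iff₀ h1 h2]
  nlinarith

lemma c_lt_one {C : ℝ} (hC : 0 ≤ C) : C / (1 + C) < 1 := by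
  rw [div_lt_one (by linarith)]; linarith

lemma psi_phi (t : ℝ) : psi (phi t) = t := by
  have h : (0:ℝ) < 1 + |t| := by positivity
  rw [psi, abs_phi]
  have h2 : 1 - |t| / (1 + |t|) = 1 / (1 + |t|) := by field_simp; ring
  rw [h2, phi]
  field_simp

lemma continuous_phi : Continuous phi :=
  continuous_id.div (continuous_const.add continuous_abs) (fun t => by positivity)

lemma measurable_psi : Measurable psi :=
  measurable_id.div (measurable_const.sub measurable_abs)

lemma continuousAt_psi {p : ℝ} (hp : |p| < 1) : ContinuousAt psi p := by
  apply ContinuousAt.div continuousAt_id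
    (continuous_const.sub continuous_abs).continuousAt
  have : 0 < 1 - |p| := by linarith
  exact ne_of_gt this


/-- first coordinate: limsup of `phi (re (w n))`. -/
def Rf (w : ℕ → ℂ) : ℝ := limsup (fun n => phi (w n).re) atTop

def Hf (w : ℕ → ℂ) (m n : ℕ) : ℝ :=
  if |phi (w n).re - Rf w| < 1 / (m + 1) then phi (w n).im else -2

def If (w : ℕ → ℂ) : ℝ := ⨅ m, limsup (fun n => Hf w m n) atTop

def clus (w : ℕ → ℂ) : ℂ := ⟨psi (Rf w), psi (If w)⟩

lemma clus_spec (w : ℕ → ℂ) (C : ℝ) (hC : ∀ n, ‖w n‖ ≤ C) :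
    ∀ ε > 0, ∃ᶠ n in atTop, ‖w n - clus w‖ < ε := by
  intro ε hε
  have hC0 : 0 ≤ C := le_trans (norm_nonneg _) (hC 0)
  set c : ℝ := C / (1 + C) with hc
  have hc0 : 0 ≤ c := by positivity
  have hc1 : c < 1 := c_lt_one hC0
  have hu : ∀ n, |phi (w n).re| ≤ c := fun n =>
    abs_phi_le (le_trans (Complex.abs_re_le_norm _) (hC n))
  have hv : ∀ n, |phi (w n).im| ≤ c := fun n =>
    abs_phi_le (le_trans (Complex.abs_im_le_norm _) (hC n))
  have hbu : IsBoundedUnder (· ≤ ·) atTop (fun n => phi (w n).re) :=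
    isBoundedUnder_of ⟨c, fun n => (abs_le.1 (hu n)).2⟩
  have hcu : IsCoboundedUnder (· ≤ ·) atTop (fun n => phi (w n).re) :=
    isCoboundedUnder_le_of_le atTop (x := -c) fun n => (abs_le.1 (hu n)).1
  have hRle : Rf w ≤ c :=
    limsup_le_of_le hcu (Eventually.of_forall fun n => (abs_le.1 (hu n)).2)
  have hRge : -c ≤ Rf w :=
    le_limsup_of_frequently_le (Frequently.of_forall fun n => (abs_le.1 (hu n)).1) hbu
  -- frequently near R
  have freq_near : ∀ δ : ℝ, 0 < δ → ∃ᶠ n in atTop, |phi (w n).re - Rf w| < δ := by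
    intro δ hδ
    have h1 : ∃ᶠ n in atTop, Rf w - δ < phi (w n).re :=
      frequently_lt_of_lt_limsup hcu (by change Rf w - δ < Rf w; linarith)
    have h2 : ∀ᶠ n in atTop, phi (w n).re < Rf w + δ :=
      eventually_lt_of_limsup_lt (by change Rf w < Rf w + δ; linarith) hbu
    exact (h1.and_eventually h2).mono fun n ⟨ha, hb⟩ =>
      abs_sub_lt_iff.2 ⟨by linarith, by linarith⟩
  -- the H family
  have hH_cases : ∀ m n, Hf w m n = phi (w n).im ∨ Hf w m n = -2 := by
    intro m n
    unfold Hf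
    by_cases h : |phi (w n).re - Rf w| < 1 / (m + 1)
    · left; rw [if_pos h]
    · right; rw [if_neg h]
  have hHub : ∀ m n, Hf w m n ≤ c := by
    intro m n
    rcases hH_cases m n with h | h <;> rw [h]
    · exact (abs_le.1 (hv n)).2
    · linarith
  have hHlb : ∀ m n, -2 ≤ Hf w m n := by
    intro m n
    rcases hH_cases m n with h | h
    · rw [h]; linarith [(abs_le.1 (hv n)).1]
    · rw [h]
  have hbH : ∀ m, IsBoundedUnder (· ≤ ·) atTop (Hf w m) :=
    fun m => isBoundedUnder_of ⟨c, fun n => hHub m n⟩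
  have hcH : ∀ m, IsCoboundedUnder (· ≤ ·) atTop (Hf w m) :=
    fun m => isCoboundedUnder_le_of_le atTop (x := -2) fun n => hHlb m n
  set L : ℕ → ℝ := fun m => limsup (fun n => Hf w m n) atTop with hL_def
  have hIeq : If w = ⨅ m, L m := rfl
  -- frequently the if-condition is true
  have hfreqH : ∀ m : ℕ, ∃ᶠ n in atTop,
      Hf w m n = phi (w n).im ∧ |phi (w n).re - Rf w| < 1 / (m + 1) := by
    intro m
    have hpos : (0:ℝ) < 1 / ((m:ℝ) + 1) := by positivity
    refine (freq_near _ hpos).mono fun n hn => ⟨?_, hn⟩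
    unfold Hf; rw [if_pos hn]
  have hLge : ∀ m, -c ≤ L m := by
    intro m
    refine le_limsup_of_frequently_le ?_ (hbH m)
    exact (hfreqH m).mono fun n hn => by rw [hn.1]; exact (abs_le.1 (hv n)).1
  have hLle : ∀ m, L m ≤ c :=
    fun m => limsup_le_of_le (hcH m) (Eventually.of_forall fun n => hHub m n)
  have hLanti : Antitone L := by
    intro m m' hmm'
    refine limsup_le_limsup (Eventually.of_forall fun n => ?_) (hcH m') (hbH m)
    by_cases h : |phi (w n).re - Rf w| < 1 / (m' + 1)
    · have h2 : |phi (w n).re - Rf w| < 1 / (m + 1) :=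
        lt_of_lt_of_le h (by
          apply one_div_le_one_div_of_le (by positivity)
          exact_mod_cast Nat.add_le_add_right hmm' 1)
      simp only [Hf]; rw [if_pos h, if_pos h2]
    · simp only [Hf]; rw [if_neg h]
      split_ifs with h3
      · linarith [(abs_le.1 (hv n)).1]
      · exact le_refl _
  have hbdd : BddBelow (Set.range L) := ⟨-c, by rintro _ ⟨m, rfl⟩; exact hLge m⟩
  have hIge : -c ≤ If w := by rw [hIeq]; exact le_ciInf hLge
  have hIle : If w ≤ c := by rw [hIeq]; exact le_trans (ciInf_le hbdd 0) (hLle 0)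
  have hIL : ∀ m, If w ≤ L m := by intro m; rw [hIeq]; exact ciInf_le hbdd m
  -- stage-2 frequently
  have freq2 : ∀ δ : ℝ, 0 < δ → δ ≤ 1 →
      ∃ᶠ n in atTop, |phi (w n).re - Rf w| < δ ∧ |phi (w n).im - If w| < δ := by
    intro δ hδ hδ1
    obtain ⟨m₀, hm₀⟩ : ∃ m, L m < If w + δ := by
      apply exists_lt_of_ciInf_lt
      rw [← hIeq]; linarith
    obtain ⟨m₁, hm₁⟩ := exists_nat_one_div_lt hδ
    set m := max m₀ m₁ with hm_def
    have hLm : L m < If w + δ := lt_of_le_of_lt (hLanti (le_max_left _ _)) hm₀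
    have hmδ : 1 / ((m:ℝ) + 1) < δ := by
      refine lt_of_le_of_lt ?_ hm₁
      apply one_div_le_one_div_of_le (by positivity)
      exact_mod_cast Nat.add_le_add_right (le_max_right m₀ m₁) 1
    have h1 : ∃ᶠ n in atTop, If w - δ < Hf w m n :=
      frequently_lt_of_lt_limsup (hcH m) (by
        have := hIL m
        change If w - δ < L m
        linarith)
    have h2 : ∀ᶠ n in atTop, Hf w m n < If w + δ :=
      eventually_lt_of_limsup_lt hLm (hbH m)
    refine (h1.and_eventually h2).mono fun n ⟨ha, hb⟩ => ?_
    have hne : Hf w m n = phi (w n).im := by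
      rcases hH_cases m n with h | h
      · exact h
      · exfalso; rw [h] at ha; linarith
    have hcond : |phi (w n).re - Rf w| < 1 / (m + 1) := by
      by_contra h
      unfold Hf at hne
      rw [if_neg h] at hne
      have := (abs_le.1 (hv n)).1
      rw [← hne] at this; linarith
    rw [hne] at ha hb
    exact ⟨lt_trans hcond hmδ, abs_sub_lt_iff.2 ⟨by linarith, by linarith⟩⟩
  -- continuity of psi at Rf w and If w
  have hRc : ContinuousAt psi (Rf w) :=
    continuousAt_psi (abs_lt.2 ⟨by linarith, by linarith⟩)
  have hIc : ContinuousAt psi (If w) :=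
    continuousAt_psi (abs_lt.2 ⟨by linarith, by linarith⟩)
  obtain ⟨δ₁, hδ₁, hδ₁'⟩ := Metric.continuousAt_iff.1 hRc (ε/2) (by linarith)
  obtain ⟨δ₂, hδ₂, hδ₂'⟩ := Metric.continuousAt_iff.1 hIc (ε/2) (by linarith)
  set δ : ℝ := min (min δ₁ δ₂) 1 with hδ_def
  have hδpos : 0 < δ := lt_min (lt_min hδ₁ hδ₂) one_pos
  refine (freq2 δ hδpos (min_le_right _ _)).mono fun n ⟨h1, h2⟩ => ?_
  have hre : |(w n).re - psi (Rf w)| < ε/2 := by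
    have := hδ₁' (x := phi (w n).re) (by
      rw [Real.dist_eq]
      exact lt_of_lt_of_le h1 (le_trans (min_le_left _ _) (min_le_left _ _)))
    rw [Real.dist_eq, psi_phi] at this
    exact this
  have him : |(w n).im - psi (If w)| < ε/2 := by
    have := hδ₂' (x := phi (w n).im) (by
      rw [Real.dist_eq]
      exact lt_of_lt_of_le h2 (le_trans (min_le_left _ _) (min_le_right _ _)))
    rw [Real.dist_eq, psi_phi] at this
    exact this
  calc ‖w n - clus w‖ ≤ |(w n - clus w).re| + |(w n - clus w).im| :=
        Complex.norm_le_abs_re_add_abs_im _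
    _ < ε := by
        rw [Complex.sub_re, Complex.sub_im]
        have e1 : (clus w).re = psi (Rf w) := rfl
        have e2 : (clus w).im = psi (If w) := rfl
        rw [e1, e2]; linarith


lemma measurable_clus {Ω : Type*} [MeasurableSpace Ω] {g : ℕ → Ω → ℂ}
    (hg : ∀ n, Measurable (g n)) :
    Measurable fun ω => clus (fun n => g n ω) := by
  have hre : ∀ n : ℕ, Measurable fun ω => phi (g n ω).re := fun n =>
    continuous_phi.measurable.comp (Complex.measurable_re.comp (hg n))
  have him : ∀ n : ℕ, Measurable fun ω => phi (g n ω).im := fun n =>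
    continuous_phi.measurable.comp (Complex.measurable_im.comp (hg n))
  have hR : Measurable fun ω => Rf (fun n => g n ω) :=
    Measurable.limsup hre
  have hH : ∀ m n : ℕ, Measurable fun ω => Hf (fun k => g k ω) m n := by
    intro m n
    apply Measurable.ite _ (him n) measurable_const
    have : Measurable fun ω => |phi (g n ω).re - Rf (fun k => g k ω)| :=
      ((hre n).sub hR).abs
    exact measurableSet_lt this measurable_const
  have hI : Measurable fun ω => If (fun n => g n ω) :=
    Measurable.iInf fun m => Measurable.limsup (hH m)
  have : (fun ω => clus (fun n => g n ω)) = fun ω =>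
      (psi (Rf (fun n => g n ω)) : ℂ) + (psi (If (fun n => g n ω)) : ℂ) * Complex.I := by
    funext ω
    rw [clus, Complex.mk_eq_add_mul_I]
  rw [this]
  exact (Complex.measurable_ofReal.comp (measurable_psi.comp hR)).add
    ((Complex.measurable_ofReal.comp (measurable_psi.comp hI)).mul measurable_const)

lemma mem_spectrum_of_cluster {A : Type*} [NormedRing A] [NormedAlgebra ℂ A]
    [CompleteSpace A] {b : A} {s : ℕ → A} {w : ℕ → ℂ} {z : ℂ}
    (hs : Tendsto s atTop (nhds b)) (hw : ∀ n, w n ∈ spectrum ℂ (s n))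
    (hz : ∀ ε > 0, ∃ᶠ n in atTop, ‖w n - z‖ < ε) :
    z ∈ spectrum ℂ b := by
  rw [spectrum.mem_iff]
  intro h
  have hG : Continuous (fun p : ℂ × A => algebraMap ℂ A p.1 - p.2) :=
    ((continuous_algebraMap ℂ A).comp continuous_fst).sub continuous_snd
  have hO : IsOpen {p : ℂ × A | IsUnit (algebraMap ℂ A p.1 - p.2)} :=
    Units.isOpen.preimage hG
  have hmem : (z, b) ∈ {p : ℂ × A | IsUnit (algebraMap ℂ A p.1 - p.2)} := h
  obtain ⟨ε, hε, hball⟩ := Metric.isOpen_iff.1 hO _ hmem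
  have h2 : ∀ᶠ n in atTop, dist (s n) b < ε := (Metric.tendsto_nhds.1 hs) ε hε
  obtain ⟨n, hn1, hn2⟩ := ((hz ε hε).and_eventually h2).exists
  have : (w n, s n) ∈ Metric.ball (z, b) ε := by
    rw [Metric.mem_ball, Prod.dist_eq, max_lt_iff]
    exact ⟨by rwa [Complex.dist_eq], hn2⟩
  exact spectrum.mem_iff.1 (hw n) (hball this)


end

end Stmt6Aux

open Stmt6Aux in
/-- For every a.e. strongly measurable `x : Ω → A` the spectrum
`sp(x) ⊆ L⁰(Ω, ℂ)` is non-empty: there is a measurable `a : Ω → ℂ` such that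
`a·1 − x` is not invertible in `L⁰(Ω, A)`, i.e. there is no a.e. strongly
measurable `y : Ω → A` with `(a ω • 1 - x ω) * y ω = y ω * (a ω • 1 - x ω) = 1`
for μ-a.e. ω. (Proposition 2.4.) -/
theorem stmt6 {Ω : Type*} [MeasurableSpace Ω] (μ : Measure Ω) [IsFiniteMeasure μ]
    (hμ : 0 < μ Set.univ)
    {A : Type*} [NormedRing A] [NormedAlgebra ℂ A] [CompleteSpace A] [NormOneClass A]
    (x : Ω → A) (hx : AEStronglyMeasurable x μ) :
    ∃ a : Ω → ℂ, Measurable a ∧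
      ¬ ∃ y : Ω → A, AEStronglyMeasurable y μ ∧
        ∀ᵐ ω ∂μ, (a ω • (1 : A) - x ω) * y ω = 1 ∧
                 y ω * (a ω • (1 : A) - x ω) = 1 := by
  classical
  haveI : Nontrivial A := NormOneClass.nontrivial
  set x' : Ω → A := hx.mk x with hx'_def
  have hsm : StronglyMeasurable x' := hx.stronglyMeasurable_mk
  have hxe : x =ᵐ[μ] x' := hx.ae_eq_mk
  -- spectrum point selector
  set sel : A → ℂ := fun b => (spectrum.nonempty b).choose with hsel_def
  have hsel : ∀ b : A, sel b ∈ spectrum ℂ b := fun b => (spectrum.nonempty b).choose_spec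
  set g : ℕ → Ω → ℂ := fun n ω => sel (hsm.approx n ω) with hg_def
  have hgm : ∀ n, Measurable (g n) := by
    intro n
    have := ((hsm.approx n).map sel).measurable
    exact this
  set a : Ω → ℂ := fun ω => clus (fun n => g n ω) with ha_def
  have ham : Measurable a := measurable_clus hgm
  -- a ω is in the spectrum of x' ω
  have key : ∀ ω, a ω ∈ spectrum ℂ (x' ω) := by
    intro ω
    have htd : Tendsto (fun n => hsm.approx n ω) atTop (nhds (x' ω)) := hsm.tendsto_approx ω
    have hbd : BddAbove (Set.range fun n => ‖hsm.approx n ω‖) :=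
      (htd.norm).bddAbove_range
    obtain ⟨C, hC⟩ := hbd
    have hCb : ∀ n, ‖g n ω‖ ≤ C := by
      intro n
      have h1 : ‖g n ω‖ ≤ ‖hsm.approx n ω‖ := spectrum.norm_le_norm_of_mem (hsel _)
      exact le_trans (le_trans le_rfl h1)
        (hC ⟨n, rfl⟩)
    exact mem_spectrum_of_cluster htd (fun n => hsel _) (clus_spec _ C hCb)
  refine ⟨a, ham, ?_⟩
  rintro ⟨y, hy, hae⟩
  haveI : (ae μ).NeBot := ae_neBot.2 (by
    intro h0
    rw [h0] at hμ
    simp at hμ)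
  obtain ⟨ω, hxeq, h1, h2⟩ := (hxe.and hae).exists
  have hunit : IsUnit (a ω • (1:A) - x' ω) := by
    rw [← hxeq]
    exact ⟨⟨a ω • (1:A) - x ω, y ω, h1, h2⟩, rfl⟩
  have halg : algebraMap ℂ A (a ω) - x' ω = a ω • (1:A) - x' ω := by
    rw [Algebra.algebraMap_eq_smul_one]
  exact spectrum.mem_iff.1 (key ω) (halg ▸ hunit)
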